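/- Let G be a countable discrete group, ℓ²(G) the Hilbert space of square-summable complex functions on G, λ_g the left-translation unitary (λ_g f)(x) = f(g⁻¹x), C*_r(G) the operator-norm closure in the bounded operators on ℓ²(G) of the *-subalgebra generated by {λ_g : g ∈ G}, δ_γ the indicator function of γ, e the identity of G, and j(a)(γ) = ⟨δ_γ, a δ_e⟩. Then j is a linear map on C*_r(G) such that: (1) for every finite linear combination a = ∑_{g∈F} c_g λ_g (F ⊆ G finite, c_g ∈ ℂ), j(a)(γ) = c_γ for γ ∈ F and j(a)(γ) = 0 for γ ∉ F; (2) j is norm reducing into c₀(G), i.e. sup_{γ∈G} |j(a)(γ)| ≤ ‖a‖ and for every ε > 0 the set {γ ∈ G : |j(a)(γ)| ≥ ε} is finite; and (3) j is injective: if a ∈ C*_r(G) and j(a)(γ) = 0 for all γ ∈ G, then a = 0. -/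

import Mathlib

/-- The element `j(a)(γ) = ⟨δ_γ, a δ_e⟩` of the ℓ²-matrix-coefficient map, for a bounded
operator `a` on `ℓ²(G)`.  The inner product is conjugate-linear in the first variable. -/
noncomputable def jmap {G : Type*} [Group G] [DecidableEq G]
    (a : lp (fun _ : G => ℂ) 2 →L[ℂ] lp (fun _ : G => ℂ) 2) (γ : G) : ℂ :=
  inner (𝕜 := ℂ) (lp.single 2 γ (1 : ℂ)) (a (lp.single 2 (1 : G) (1 : ℂ)))

/-- The reduced group C*-algebra: the operator-norm closure of the ∗-subalgebra of
bounded operators on `ℓ²(G)` generated by the left-translation unitaries. -/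
noncomputable def reducedGroupCStarAlgebra {G : Type*} [Group G]
    (lam : G → (lp (fun _ : G => ℂ) 2 →L[ℂ] lp (fun _ : G => ℂ) 2)) :
    StarSubalgebra ℂ (lp (fun _ : G => ℂ) 2 →L[ℂ] lp (fun _ : G => ℂ) 2) :=
  (StarAlgebra.adjoin ℂ (Set.range lam)).topologicalClosure

open scoped ENNReal

section aux

variable {G : Type*} [Group G]

private lemma memℓp_rho (g : G) (f : lp (fun _ : G => ℂ) 2) :
    Memℓp (fun x : G => (f : ∀ _ : G, ℂ) (x * g)) 2 := by
  have h : Summable fun i : G => ‖f i‖ ^ (2 : ℝ≥0∞).toReal :=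
    (lp.memℓp f).summable (by norm_num)
  exact memℓp_gen (h.comp_injective (Equiv.mulRight g).injective)

/-- Right translation `(ρ_g f)(x) = f (x * g)` as a linear isometry on `ℓ²(G)`. -/
private noncomputable def rhoLI (g : G) :
    lp (fun _ : G => ℂ) 2 →ₗᵢ[ℂ] lp (fun _ : G => ℂ) 2 where
  toFun f := ⟨fun x => (f : ∀ _ : G, ℂ) (x * g), memℓp_rho g f⟩
  map_add' f h := rfl
  map_smul' c f := rfl
  norm_map' f := by
    have h2 : (0:ℝ) < (2 : ℝ≥0∞).toReal := by norm_num
    rw [lp.norm_eq_tsum_rpow h2, lp.norm_eq_tsum_rpow h2]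
    congr 1
    exact (Equiv.mulRight g).tsum_eq (fun x => ‖f x‖ ^ (2 : ℝ≥0∞).toReal)

/-- Right translation as a continuous linear map. -/
private noncomputable def rhoL (g : G) :
    lp (fun _ : G => ℂ) 2 →L[ℂ] lp (fun _ : G => ℂ) 2 :=
  (rhoLI g).toContinuousLinearMap

@[simp] private lemma rhoL_apply (g : G) (f : lp (fun _ : G => ℂ) 2) (x : G) :
    rhoL g f x = f (x * g) := rfl

private lemma star_rhoL (g : G) : star (rhoL g) = rhoL (g⁻¹ : G) := by
  rw [ContinuousLinearMap.star_eq_adjoint]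
  symm
  rw [ContinuousLinearMap.eq_adjoint_iff]
  intro f h
  rw [lp.inner_eq_tsum, lp.inner_eq_tsum]
  refine (((Equiv.mulRight g).tsum_eq
    (fun x => (inner ℂ (rhoL (g⁻¹:G) f x) (h x) : ℂ))).symm).trans ?_
  refine tsum_congr fun y => ?_
  simp

end aux

private lemma jmap_eq {G : Type*} [Group G] [DecidableEq G]
    (a : lp (fun _ : G => ℂ) 2 →L[ℂ] lp (fun _ : G => ℂ) 2) (γ : G) :
    jmap a γ = (a (lp.single 2 (1 : G) (1 : ℂ))) γ := by
  rw [jmap, lp.inner_single_left]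
  simp [RCLike.inner_apply]

set_option maxHeartbeats 1600000 in
/-- Renault's `j`-map for the reduced C*-algebra of a countable discrete group:
`j(a)(γ) = ⟨δ_γ, a δ_e⟩` is linear, satisfies `j(∑_{g∈F} c_g λ_g)(γ) = c_γ` for `γ ∈ F`
(and `= 0` otherwise), is norm reducing into `c₀(G)`, and is injective on `C*_r(G)`. -/
theorem jmap_linear_normReducing_injective {G : Type*} [Group G] [Countable G]
    [DecidableEq G]
    (lam : G → (lp (fun _ : G => ℂ) 2 →L[ℂ] lp (fun _ : G => ℂ) 2))
    (hlam : ∀ (g : G) (f : lp (fun _ : G => ℂ) 2) (x : G), lam g f x = f (g⁻¹ * x)) :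
    -- `j` is linear
    (∀ a b : lp (fun _ : G => ℂ) 2 →L[ℂ] lp (fun _ : G => ℂ) 2, ∀ γ : G,
      jmap (a + b) γ = jmap a γ + jmap b γ) ∧
    (∀ (c : ℂ) (a : lp (fun _ : G => ℂ) 2 →L[ℂ] lp (fun _ : G => ℂ) 2) (γ : G),
      jmap (c • a) γ = c * jmap a γ) ∧
    -- (1) values on finite linear combinations of the translation unitaries
    (∀ (F : Finset G) (c : G → ℂ) (γ : G),
      jmap (∑ g ∈ F, c g • lam g) γ = if γ ∈ F then c γ else 0) ∧
    -- (2) `j` is norm reducing into `c₀(G)`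
    (∀ a ∈ reducedGroupCStarAlgebra lam, ∀ γ : G, ‖jmap a γ‖ ≤ ‖a‖) ∧
    (∀ a ∈ reducedGroupCStarAlgebra lam, ∀ ε : ℝ, 0 < ε →
      {γ : G | ε ≤ ‖jmap a γ‖}.Finite) ∧
    -- (3) `j` is injective on `C*_r(G)`
    (∀ a ∈ reducedGroupCStarAlgebra lam, (∀ γ : G, jmap a γ = 0) → a = 0) := by
  set δe : lp (fun _ : G => ℂ) 2 := lp.single 2 (1 : G) (1 : ℂ) with hδe
  refine ⟨?_, ?_, ?_, ?_, ?_, ?_⟩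
  · -- additivity
    intro a b γ
    simp [jmap_eq, lp.coeFn_add]
  · -- homogeneity
    intro c a γ
    simp [jmap_eq, lp.coeFn_smul]
  · -- values on finite combinations
    intro F c γ
    rw [jmap_eq]
    rw [ContinuousLinearMap.sum_apply]
    rw [lp.coeFn_sum, Finset.sum_apply]
    have hterm : ∀ g ∈ F, ((c g • lam g) δe : ∀ _ : G, ℂ) γ
        = if g = γ then c g else 0 := by
      intro g _
      rw [ContinuousLinearMap.smul_apply, lp.coeFn_smul, Pi.smul_apply, smul_eq_mul,
        hlam g δe γ, hδe, lp.single_apply]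
      rcases eq_or_ne g γ with h | h
      · subst h; simp
      · rw [if_neg h, Pi.single_eq_of_ne (by simpa [inv_mul_eq_one] using h), mul_zero]
    rw [Finset.sum_congr rfl hterm, Finset.sum_ite_eq' F γ c]
  · -- pointwise norm estimate
    intro a _ γ
    rw [jmap_eq]
    have h1 : ‖(a δe : ∀ _ : G, ℂ) γ‖ ≤ ‖a δe‖ :=
      lp.norm_apply_le_norm (by norm_num) (a δe) γ
    have h2 : ‖a δe‖ ≤ ‖a‖ * ‖δe‖ := a.le_opNorm δe
    have h3 : ‖δe‖ = 1 := by
      have := lp.norm_single (p := 2) (E := fun _ : G => ℂ) (by norm_num)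
        (1 : G) (1 : ℂ)
      simpa [hδe] using this
    calc ‖(a δe : ∀ _ : G, ℂ) γ‖ ≤ ‖a δe‖ := h1
      _ ≤ ‖a‖ * ‖δe‖ := h2
      _ = ‖a‖ := by rw [h3, mul_one]
  · -- finiteness of large values
    intro a _ ε hε
    have hsum : Summable fun γ : G => ‖(a δe : ∀ _ : G, ℂ) γ‖ ^ (2 : ℝ≥0∞).toReal :=
      (lp.memℓp (a δe)).summable (by norm_num)
    have htend := hsum.tendsto_cofinite_zero
    have hev : ∀ᶠ γ in Filter.cofinite,
        ‖(a δe : ∀ _ : G, ℂ) γ‖ ^ (2 : ℝ≥0∞).toReal < ε ^ (2 : ℝ≥0∞).toReal := by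
      refine htend.eventually_lt_const ?_
      positivity
    refine (Filter.eventually_cofinite.mp hev).subset ?_
    intro γ hγ
    simp only [Set.mem_setOf_eq] at hγ ⊢
    rw [jmap_eq] at hγ
    intro hlt
    exact absurd (Real.rpow_le_rpow hε.le hγ (by norm_num)) (not_le.mpr hlt)
  · -- injectivity
    intro a ha h0
    -- every element of the reduced algebra commutes with the right translations
    have hcomm : ∀ g : G, a * rhoL g = rhoL g * a := by
      have hclosed : IsClosed {b : lp (fun _ : G => ℂ) 2 →L[ℂ] lp (fun _ : G => ℂ) 2 |
          ∀ g : G, b * rhoL g = rhoL g * b} := by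
        have : {b : lp (fun _ : G => ℂ) 2 →L[ℂ] lp (fun _ : G => ℂ) 2 |
            ∀ g : G, b * rhoL g = rhoL g * b}
            = ⋂ g : G, {b | b * rhoL g = rhoL g * b} := by
          ext b; simp [Set.mem_iInter]
        rw [this]
        exact isClosed_iInter fun g =>
          isClosed_eq (continuous_id.mul continuous_const)
            (continuous_const.mul continuous_id)
      have hsub : ((StarAlgebra.adjoin ℂ (Set.range lam) :
          StarSubalgebra ℂ (lp (fun _ : G => ℂ) 2 →L[ℂ] lp (fun _ : G => ℂ) 2)) : Set _)
          ⊆ {b | ∀ g : G, b * rhoL g = rhoL g * b} := by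
        intro b hb
        induction hb using StarAlgebra.adjoin_induction with
        | mem x hx =>
          obtain ⟨h, rfl⟩ := hx
          intro g
          ext f x
          rw [ContinuousLinearMap.mul_apply, ContinuousLinearMap.mul_apply,
            hlam h (rhoL g f) x, rhoL_apply, rhoL_apply, hlam h f (x * g), mul_assoc]
        | algebraMap r =>
          intro g
          exact Algebra.commutes r (rhoL g)
        | add x y hx hy ihx ihy =>
          intro g
          rw [add_mul, mul_add, ihx g, ihy g]
        | mul x y hx hy ihx ihy =>
          intro g
          rw [mul_assoc, ihy g, ← mul_assoc, ihx g, mul_assoc]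
        | star x hx ihx =>
          intro g
          have := congrArg star (ihx g⁻¹)
          rw [star_mul, star_mul, star_rhoL, inv_inv] at this
          exact this.symm
      have ha' : a ∈ closure ((StarAlgebra.adjoin ℂ (Set.range lam) :
          StarSubalgebra ℂ (lp (fun _ : G => ℂ) 2 →L[ℂ] lp (fun _ : G => ℂ) 2)) : Set _) := ha
      exact closure_minimal hsub hclosed ha'
    -- `a δ_e = 0`
    have hae : a δe = 0 := by
      refine lp.ext (funext fun γ => ?_)
      have := h0 γ
      rw [jmap_eq] at this
      simpa using this
    -- `a δ_γ = 0` for all γ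
    have hsingle : ∀ γ : G, a (lp.single 2 γ (1 : ℂ)) = 0 := by
      intro γ
      have hδ : rhoL (γ⁻¹ : G) δe = lp.single (E := fun _ : G => ℂ) 2 γ (1 : ℂ) := by
        refine lp.ext (funext fun x => ?_)
        rw [rhoL_apply, hδe, lp.single_apply, lp.single_apply]
        rcases eq_or_ne x γ with h | h
        · subst h; simp
        · rw [Pi.single_eq_of_ne h, Pi.single_eq_of_ne (by simpa [mul_inv_eq_one] using h)]
      rw [← hδ]
      have h2 := congrArg (fun b => b δe) (hcomm γ⁻¹)
      simp only [ContinuousLinearMap.mul_apply] at h2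
      rw [h2, hae, map_zero]
    -- hence `a = 0`
    ext f
    have hS : HasSum (fun γ : G => lp.single 2 γ ((f : ∀ _ : G, ℂ) γ)) f :=
      lp.hasSum_single (by norm_num) f
    have hS' : HasSum (fun γ : G => a (lp.single 2 γ ((f : ∀ _ : G, ℂ) γ))) (a f) :=
      a.hasSum hS
    have hz : ∀ γ : G, a (lp.single 2 γ ((f : ∀ _ : G, ℂ) γ)) = 0 := by
      intro γ
      have : lp.single 2 γ ((f : ∀ _ : G, ℂ) γ) = (f : ∀ _ : G, ℂ) γ • lp.single (E := fun _ : G => ℂ) 2 γ (1 : ℂ) := by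
        rw [← lp.single_smul, smul_eq_mul, mul_one]
      rw [this, map_smul, hsingle γ, smul_zero]
    rw [funext hz] at hS'
    have : a f = 0 := hS'.unique hasSum_zero
    simp [this]
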